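/- Let ℓ₁, ℓ₂, N be positive integers with ℓ₁ + ℓ₂ ≥ N, and let 𝒬ₙ be the Hahn polynomials with negative parameters as above. Then for 0 ≤ n ≤ min(ℓ₁,N) + min(ℓ₂,N) - N, Σ_{x=N-min(ℓ₂,N)}^{min(ℓ₁,N)} 𝒬ₙ(x)² 𝓗(x) = (-1)ⁿ n! (-ℓ₂)ₙ (-ℓ₁-ℓ₂+N)ₙ (ℓ₁+ℓ₂+1-n) / ((-ℓ₁)ₙ (-ℓ₁-ℓ₂)ₙ (-N)ₙ (ℓ₁+ℓ₂+1-2n)). -/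

import Mathlib

/-- Pochhammer symbol `(a)_n = a(a+1)⋯(a+n-1)`. -/
def poch {R : Type*} [CommRing R] (a : R) (n : ℕ) : R :=
  ∏ i ∈ Finset.range n, (a + i)

/-- Hahn polynomial with negative integer parameters `a = -l1-1`, `b = -l2-1`. -/
def hahnQ (l1 l2 Nq : ℚ) (n : ℕ) (x : ℚ) : ℚ :=
  ∑ k ∈ Finset.range (n + 1),
    poch (-(n : ℚ)) k * poch ((n : ℚ) - l1 - l2 - 1) k * poch (-x) k /
      (poch (-l1) k * poch (-Nq) k * (k.factorial : ℚ))

/-- Hypergeometric distribution. -/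
def hyperH (l1 l2 N x : ℕ) : ℚ :=
  ((l1.choose x : ℚ) * (l2.choose (N - x) : ℚ)) / ((l1 + l2).choose N : ℚ)

theorem poch_zero {R : Type*} [CommRing R] (a : R) : poch a 0 = 1 := by simp [poch]
theorem poch_succ {R : Type*} [CommRing R] (a : R) (n : ℕ) :
    poch a (n+1) = poch a n * (a + n) := Finset.prod_range_succ _ _
theorem poch_succ_left {R : Type*} [CommRing R] (a : R) (n : ℕ) :
    poch a (n+1) = a * poch (a+1) n := by
  rw [poch, Finset.prod_range_succ', poch]
  rw [mul_comm]
  congr 1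
  · simp
  · apply Finset.prod_congr rfl; intro i _; push_cast; ring

theorem poch_nat (a k : ℕ) : poch (-(a:ℚ)) k = (-1)^k * k.factorial * a.choose k := by
  induction k with
  | zero => simp [poch_zero]
  | succ k ih =>
    rw [poch_succ, ih]
    have h : ((a:ℚ) - k) * a.choose k = (k+1) * a.choose (k+1) := by
      rcases le_or_gt k a with hk | hk
      · have := Nat.choose_succ_right_eq a k
        have hc : ((a.choose (k+1) * (k+1) : ℕ) : ℚ) = ((a.choose k * (a - k) : ℕ) : ℚ) :=
          congrArg _ this
        push_cast [Nat.cast_sub hk] at hc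
        linarith [hc]
      · rw [Nat.choose_eq_zero_of_lt hk, Nat.choose_eq_zero_of_lt (by omega)]
        simp
    rw [pow_succ, Nat.factorial_succ]
    push_cast
    linear_combination (-(-1:ℚ)^k * k.factorial) * h

theorem choose_ne (a k : ℕ) (h : k ≤ a) : (a.choose k : ℚ) ≠ 0 := by
  exact_mod_cast (Nat.choose_pos h).ne'

theorem cc2 (a k : ℕ) (ha : 1 ≤ a) :
    (a:ℚ) * ((a-1).choose k) = ((a:ℚ) - k) * a.choose k := by
  have h := Nat.choose_mul_succ_eq (a-1) k
  have e1 : a - 1 + 1 = a := by omega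
  rw [e1] at h
  rcases le_or_gt k a with hk | hk
  · have hc : (((a-1).choose k * a : ℕ) : ℚ) = ((a.choose k * (a - k) : ℕ) : ℚ) := congrArg _ h
    push_cast [Nat.cast_sub hk] at hc
    linarith
  · rw [Nat.choose_eq_zero_of_lt hk, Nat.choose_eq_zero_of_lt (by omega : a - 1 < k)]
    ring

theorem cc3 (a k : ℕ) (ha : 1 ≤ a) (hk : 1 ≤ k) :
    (a:ℚ) * ((a-1).choose (k-1)) = (k:ℚ) * a.choose k := by
  have h := Nat.add_one_mul_choose_eq (a-1) (k-1)
  have e1 : (a-1).succ = a := by omega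
  have e2 : (k-1).succ = k := by omega
  rw [Nat.succ_eq_add_one] at e1 e2
  rw [e1, e2] at h
  have hc : ((a * (a-1).choose (k-1) : ℕ) : ℚ) = ((a.choose k * k : ℕ) : ℚ) := congrArg _ h
  push_cast at hc
  linarith

def Qb (l1 l2 N n : ℕ) (x : ℚ) : ℚ :=
  ∑ k ∈ Finset.range (n + 1),
    (n.choose k : ℚ) * ((l1+l2+1-n).choose k : ℚ) * poch (-x) k /
      ((l1.choose k : ℚ) * (N.choose k : ℚ) * (k.factorial : ℚ))

theorem hahnQ_eq_Qb (l1 l2 N n : ℕ) (h : n ≤ l1 + l2 + 1) (x : ℚ) :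
    hahnQ l1 l2 N n x = Qb l1 l2 N n x := by
  unfold hahnQ Qb
  apply Finset.sum_congr rfl
  intro k _
  have em : (n : ℚ) - l1 - l2 - 1 = -(((l1+l2+1-n : ℕ)) : ℚ) := by
    push_cast [Nat.cast_sub h]; ring
  rw [em, poch_nat n k, poch_nat (l1+l2+1-n) k, poch_nat l1 k, poch_nat N k]
  have hs : ((-1:ℚ)^k * k.factorial) * ((-1:ℚ)^k * k.factorial) ≠ 0 := by
    apply mul_ne_zero <;>
    · apply mul_ne_zero (pow_ne_zero _ (by norm_num))
      exact_mod_cast Nat.factorial_ne_zero k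
  have e1 : ((-1:ℚ)^k * k.factorial * (n.choose k)) * ((-1:ℚ)^k * k.factorial * ((l1+l2+1-n).choose k)) * poch (-x) k
      = (((-1:ℚ)^k * k.factorial) * ((-1:ℚ)^k * k.factorial)) * ((n.choose k : ℚ) * ((l1+l2+1-n).choose k) * poch (-x) k) := by ring
  have e2 : ((-1:ℚ)^k * k.factorial * (l1.choose k)) * ((-1:ℚ)^k * k.factorial * (N.choose k)) * (k.factorial : ℚ)
      = (((-1:ℚ)^k * k.factorial) * ((-1:ℚ)^k * k.factorial)) * ((l1.choose k : ℚ) * (N.choose k) * k.factorial) := by ring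
  rw [e1, e2, mul_div_mul_left _ _ hs]

set_option maxHeartbeats 1600000 in
theorem keyk (l1 l2 N n k : ℕ) (hn : 1 ≤ n) (hl1 : n ≤ l1) (hN : n ≤ N)
    (h2 : 2*n ≤ l1+l2) (hk : k ≤ n) :
    (if k < n then
        ((n-1).choose k : ℚ) * ((l1+l2-n).choose k) /
          (((l1-1).choose k : ℚ) * ((N-1).choose k) * k.factorial) * ((N:ℚ)-k) * ((l1:ℚ)-k)
      else 0)
    + (if k = 0 then 0 else
        ((n-1).choose (k-1) : ℚ) * ((l1+l2-n).choose (k-1)) /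
          (((l1-1).choose (k-1) : ℚ) * ((N-1).choose (k-1)) * (k-1).factorial)
          * ((l1:ℚ) + l2 - ((k-1 : ℕ) : ℚ)))
    = (l1:ℚ) * N *
        ((n.choose k : ℚ) * ((l1+l2+1-n).choose k) /
          ((l1.choose k : ℚ) * (N.choose k) * k.factorial)) := by
  set M := l1 + l2 + 1 - n with hMdef
  have hM : 1 ≤ M := by omega
  have hMQ : ((M : ℕ) : ℚ) = (l1:ℚ) + l2 + 1 - n := by
    rw [hMdef]; push_cast [Nat.cast_sub (by omega : n ≤ l1+l2+1)]; ring
  have hMm : M - 1 = l1 + l2 - n := by omega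
  have hn0 : (n:ℚ) ≠ 0 := Nat.cast_ne_zero.mpr (by omega)
  have hl0 : (l1:ℚ) ≠ 0 := Nat.cast_ne_zero.mpr (by omega)
  have hN0 : (N:ℚ) ≠ 0 := Nat.cast_ne_zero.mpr (by omega)
  have hM0 : ((M:ℕ):ℚ) ≠ 0 := Nat.cast_ne_zero.mpr (by omega)
  have hY1 : (l1.choose k : ℚ) ≠ 0 := choose_ne _ _ (by omega)
  have hY2 : (N.choose k : ℚ) ≠ 0 := choose_ne _ _ (by omega)
  have hkf : (k.factorial : ℚ) ≠ 0 := Nat.cast_ne_zero.mpr (Nat.factorial_ne_zero k)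
  have f1 : ((n-1).choose k : ℚ) = ((n:ℚ)-k) * (n.choose k) / n := by
    rw [eq_div_iff hn0]; linear_combination cc2 n k hn
  have f2 : ((l1+l2-n).choose k : ℚ) = (((M:ℕ):ℚ)-k) * (M.choose k) / M := by
    rw [eq_div_iff hM0, ← hMm]; linear_combination cc2 M k hM
  have f3 : ((l1-1).choose k : ℚ) = ((l1:ℚ)-k) * (l1.choose k) / l1 := by
    rw [eq_div_iff hl0]; linear_combination cc2 l1 k (by omega)
  have f4 : ((N-1).choose k : ℚ) = ((N:ℚ)-k) * (N.choose k) / N := by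
    rw [eq_div_iff hN0]; linear_combination cc2 N k (by omega)
  rcases Nat.eq_zero_or_pos k with hk0 | hk1
  · subst hk0
    simp only [if_pos (by omega : 0 < n), if_pos rfl]
    norm_num
    ring
  · -- k ≥ 1
    have hkQ0 : (k:ℚ) ≠ 0 := Nat.cast_ne_zero.mpr (by omega)
    have g1 : ((n-1).choose (k-1) : ℚ) = (k:ℚ) * (n.choose k) / n := by
      rw [eq_div_iff hn0]; linear_combination cc3 n k hn hk1
    have g2 : ((l1+l2-n).choose (k-1) : ℚ) = (k:ℚ) * (M.choose k) / M := by
      rw [eq_div_iff hM0, ← hMm]; linear_combination cc3 M k hM hk1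
    have g3 : ((l1-1).choose (k-1) : ℚ) = (k:ℚ) * (l1.choose k) / l1 := by
      rw [eq_div_iff hl0]; linear_combination cc3 l1 k (by omega) hk1
    have g4 : ((N-1).choose (k-1) : ℚ) = (k:ℚ) * (N.choose k) / N := by
      rw [eq_div_iff hN0]; linear_combination cc3 N k (by omega) hk1
    have hfact : (k.factorial : ℚ) = k * (k-1).factorial := by
      have e : k = (k-1) + 1 := by omega
      rw [e, Nat.factorial_succ]; push_cast; ring
    have hkm1 : ((k-1 : ℕ) : ℚ) = (k:ℚ) - 1 := by
      push_cast [Nat.cast_sub hk1]; ring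
    have hkf1 : ((k-1).factorial : ℚ) ≠ 0 := Nat.cast_ne_zero.mpr (Nat.factorial_ne_zero _)
    have T2 : ((n-1).choose (k-1) : ℚ) * ((l1+l2-n).choose (k-1)) /
          (((l1-1).choose (k-1) : ℚ) * ((N-1).choose (k-1)) * (k-1).factorial)
          * ((l1:ℚ) + l2 - ((k-1 : ℕ) : ℚ))
        = (k:ℚ) * ((l1:ℚ)+l2+1-k) * l1 * N * (n.choose k) * ((M:ℕ).choose k) /
          ((n:ℚ) * M * (l1.choose k) * (N.choose k) * k.factorial) := by
      rw [g1, g2, g3, g4, hkm1, hfact]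
      field_simp
      ring
    rcases lt_or_eq_of_le hk with hkn | hkn
    · have hlk : (l1:ℚ) - k ≠ 0 := by
        have : (k:ℚ) < l1 := by exact_mod_cast (by omega : k < l1)
        intro hcon; linarith
      have hNk : (N:ℚ) - k ≠ 0 := by
        have : (k:ℚ) < N := by exact_mod_cast (by omega : k < N)
        intro hcon; linarith
      have T1 : ((n-1).choose k : ℚ) * ((l1+l2-n).choose k) /
            (((l1-1).choose k : ℚ) * ((N-1).choose k) * k.factorial) * ((N:ℚ)-k) * ((l1:ℚ)-k)
          = ((n:ℚ)-k) * (((M:ℕ):ℚ)-k) * l1 * N * (n.choose k) * ((M:ℕ).choose k) /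
            ((n:ℚ) * M * (l1.choose k) * (N.choose k) * k.factorial) := by
        rw [f1, f2, f3, f4]
        field_simp
      rw [if_pos hkn, if_neg (by omega : ¬ k = 0), T1, T2, ← add_div]
      have hnum : ((n:ℚ)-k) * (((M:ℕ):ℚ)-k) * l1 * N * (n.choose k) * ((M:ℕ).choose k)
            + (k:ℚ) * ((l1:ℚ)+l2+1-k) * l1 * N * (n.choose k) * ((M:ℕ).choose k)
          = ((n:ℚ) * M) * ((l1:ℚ) * N * ((n.choose k) * ((M:ℕ).choose k))) := by
        rw [hMQ]; ring
      rw [hnum]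
      have hden : (n:ℚ) * M * (l1.choose k) * (N.choose k) * k.factorial
          = ((n:ℚ) * M) * ((l1.choose k : ℚ) * (N.choose k) * k.factorial) := by ring
      rw [hden, mul_div_mul_left _ _ (mul_ne_zero hn0 hM0), mul_div_assoc]
    · rw [if_neg (by omega : ¬ k < n), if_neg (by omega : ¬ k = 0), T2]
      subst hkn
      have hnum : (k:ℚ) * ((l1:ℚ)+l2+1-k) * l1 * N * (k.choose k) * ((M:ℕ).choose k)
          = ((k:ℚ) * M) * ((l1:ℚ) * N * ((k.choose k) * ((M:ℕ).choose k))) := by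
        rw [hMQ]; ring
      rw [zero_add, hnum]
      have hden : (k:ℚ) * M * (l1.choose k) * (N.choose k) * k.factorial
          = ((k:ℚ) * M) * ((l1.choose k : ℚ) * (N.choose k) * k.factorial) := by ring
      rw [hden, mul_div_mul_left _ _ (mul_ne_zero hkQ0 hM0), mul_div_assoc]

theorem onestep (l1 l2 N n : ℕ) (hn : 1 ≤ n) (hl1 : n ≤ l1) (hl2 : n ≤ l2) (hN : n ≤ N)
    (h2 : 2*n ≤ l1+l2) (x : ℚ) :
    ((l1:ℚ) - x) * ((N:ℚ) - x) * Qb (l1-1) (l2-1) (N-1) (n-1) x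
      - x * ((l2:ℚ) - N + x) * Qb (l1-1) (l2-1) (N-1) (n-1) (x-1)
    = (l1:ℚ) * N * Qb l1 l2 N n x := by
  -- coefficient of the lower Q
  set D : ℕ → ℚ := fun k => ((n-1).choose k : ℚ) * ((l1+l2-n).choose k) /
      (((l1-1).choose k : ℚ) * ((N-1).choose k) * k.factorial) with hD
  have harg : (l1-1) + (l2-1) + 1 - (n-1) = l1 + l2 - n := by omega
  have hQlow : ∀ y : ℚ, Qb (l1-1) (l2-1) (N-1) (n-1) y
      = ∑ k ∈ Finset.range n, D k * poch (-y) k := by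
    intro y
    unfold Qb
    have hn1 : n - 1 + 1 = n := by omega
    rw [hn1]
    apply Finset.sum_congr rfl
    intro k _
    rw [harg, hD, div_mul_eq_mul_div]
  rw [hQlow, hQlow]
  -- transform the second sum : poch (-(x-1)) k = poch (-x+1) k
  have hxm : -(x-1) = -x+1 := by ring
  rw [hxm]
  -- LHS as a single sum over range n
  rw [Finset.mul_sum, Finset.mul_sum, ← Finset.sum_sub_distrib]
  have hstep : ∀ k ∈ Finset.range n,
      ((l1:ℚ) - x) * ((N:ℚ) - x) * (D k * poch (-x) k)
        - x * ((l2:ℚ) - N + x) * (D k * poch (-x+1) k)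
      = (D k * ((N:ℚ)-k) * ((l1:ℚ)-k)) * poch (-x) k
        + (D k * ((l1:ℚ) + l2 - k)) * poch (-x) (k+1) := by
    intro k _
    have hp : poch (-x) (k+1) = (-x) * poch (-x+1) k := poch_succ_left _ _
    have hp2 : poch (-x) (k+1) = poch (-x) k * (-x + k) := poch_succ _ _
    calc ((l1:ℚ) - x) * ((N:ℚ) - x) * (D k * poch (-x) k)
          - x * ((l2:ℚ) - N + x) * (D k * poch (-x+1) k)
        = D k * (((l1:ℚ) - x) * ((N:ℚ) - x) * poch (-x) k
            + ((l2:ℚ) - N + x) * ((-x) * poch (-x+1) k)) := by ring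
      _ = D k * (((l1:ℚ) - x) * ((N:ℚ) - x) * poch (-x) k
            + ((l2:ℚ) - N + x) * (poch (-x) k * (-x + k))) := by rw [← hp, hp2]
      _ = (D k * ((N:ℚ)-k) * ((l1:ℚ)-k)) * poch (-x) k
            + (D k * ((l1:ℚ) + l2 - k)) * (poch (-x) k * (-x + k)) := by ring
      _ = _ := by rw [← hp2]
  rw [Finset.sum_congr rfl hstep, Finset.sum_add_distrib]
  -- first sum: extend to range (n+1)
  have hA : ∑ k ∈ Finset.range n, (D k * ((N:ℚ)-k) * ((l1:ℚ)-k)) * poch (-x) k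
      = ∑ k ∈ Finset.range (n+1),
          (if k < n then D k * ((N:ℚ)-k) * ((l1:ℚ)-k) else 0) * poch (-x) k := by
    rw [Finset.sum_range_succ, if_neg (lt_irrefl n), zero_mul, add_zero]
    apply Finset.sum_congr rfl
    intro k hk
    rw [if_pos (Finset.mem_range.mp hk)]
  -- second sum: reindex
  have hB : ∑ k ∈ Finset.range n, (D k * ((l1:ℚ) + l2 - k)) * poch (-x) (k+1)
      = ∑ k ∈ Finset.range (n+1),
          (if k = 0 then 0 else D (k-1) * ((l1:ℚ) + l2 - ((k-1:ℕ):ℚ))) * poch (-x) k := by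
    rw [Finset.sum_range_succ']
    norm_num
  rw [hA, hB, ← Finset.sum_add_distrib]
  unfold Qb
  rw [Finset.mul_sum]
  apply Finset.sum_congr rfl
  intro k hk
  have hk' := Finset.mem_range.mp hk
  have hkey := keyk l1 l2 N n k hn hl1 hN h2 (by omega)
  rw [← add_mul, hkey]
  ring

def Wt (l2 N x : ℕ) : ℚ := if x ≤ N then (l2.choose (N-x) : ℚ) else 0
def Fw (l1 l2 N n x : ℕ) : ℚ := Qb l1 l2 N n x * (l1.choose x : ℚ) * Wt l2 N x
def V (l1 l2 N n j : ℕ) : ℚ := ∑ x ∈ Finset.range (N+1), (x.choose j : ℚ) * Fw l1 l2 N n x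

theorem W1 (l1 l2 N : ℕ) (h1 : 1 ≤ l1) (h2 : 1 ≤ l2) (hN : 1 ≤ N) (x : ℕ) :
    ((l1:ℚ)-x) * ((N:ℚ)-x) * (l1.choose x) * Wt l2 N x
      = (l1:ℚ) * l2 * ((l1-1).choose x) * Wt (l2-1) (N-1) x := by
  unfold Wt
  rcases le_or_gt x N with hx | hx
  · rcases eq_or_lt_of_le hx with hxe | hxl
    · rw [hxe, if_pos le_rfl, if_neg (by omega : ¬ N ≤ N - 1)]
      ring
    · rw [if_pos hx, if_pos (by omega : x ≤ N - 1)]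
      have e1 : ((l1:ℚ)-x) * (l1.choose x) = l1 * ((l1-1).choose x) := (cc2 l1 x h1).symm
      have hy : 1 ≤ N - x := by omega
      have e2 : ((N:ℚ)-x) * (l2.choose (N-x)) = l2 * ((l2-1).choose (N-1-x)) := by
        have := cc3 l2 (N-x) h2 hy
        have ec : ((N - x : ℕ) : ℚ) = (N:ℚ) - x := by push_cast [Nat.cast_sub hx]; ring
        have ei : N - x - 1 = N - 1 - x := by omega
        rw [ei] at this
        rw [← ec]
        linarith [this]
      calc ((l1:ℚ)-x) * ((N:ℚ)-x) * (l1.choose x) * (l2.choose (N-x))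
          = (((l1:ℚ)-x) * (l1.choose x)) * (((N:ℚ)-x) * (l2.choose (N-x))) := by ring
        _ = ((l1:ℚ) * ((l1-1).choose x)) * ((l2:ℚ) * ((l2-1).choose (N-1-x))) := by
            rw [e1, e2]
        _ = (l1:ℚ) * l2 * ((l1-1).choose x) * ((l2-1).choose (N-1-x)) := by ring
  · rw [if_neg (by omega), if_neg (by omega)]
    ring

theorem W2 (l1 l2 N : ℕ) (h1 : 1 ≤ l1) (h2 : 1 ≤ l2) (hN : 1 ≤ N) (x : ℕ) (hx1 : 1 ≤ x) :
    (x:ℚ) * ((l2:ℚ)-N+x) * (l1.choose x) * Wt l2 N x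
      = (l1:ℚ) * l2 * ((l1-1).choose (x-1)) * Wt (l2-1) (N-1) (x-1) := by
  unfold Wt
  rcases le_or_gt x N with hx | hx
  · rw [if_pos hx, if_pos (by omega : x - 1 ≤ N - 1)]
    have e1 : (x:ℚ) * (l1.choose x) = l1 * ((l1-1).choose (x-1)) := (cc3 l1 x h1 hx1).symm
    have e2 : ((l2:ℚ)-N+x) * (l2.choose (N-x)) = l2 * ((l2-1).choose (N-x)) := by
      have := cc2 l2 (N-x) h2
      have ec : ((N - x : ℕ) : ℚ) = (N:ℚ) - x := by push_cast [Nat.cast_sub hx]; ring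
      rw [ec] at this
      linarith [this]
    have ei : N - 1 - (x - 1) = N - x := by omega
    rw [ei]
    calc (x:ℚ) * ((l2:ℚ)-N+x) * (l1.choose x) * (l2.choose (N-x))
        = ((x:ℚ) * (l1.choose x)) * (((l2:ℚ)-N+x) * (l2.choose (N-x))) := by ring
      _ = ((l1:ℚ) * ((l1-1).choose (x-1))) * ((l2:ℚ) * ((l2-1).choose (N-x))) := by
          rw [e1, e2]
      _ = _ := by ring
  · rw [if_neg (by omega), if_neg (by omega)]
    ring

theorem FwStep (l1 l2 N n : ℕ) (hn : 1 ≤ n) (hl1 : n ≤ l1) (hl2 : n ≤ l2) (hN : n ≤ N)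
    (h2 : 2*n ≤ l1+l2) (x : ℕ) :
    (N:ℚ) * Fw l1 l2 N n x
      = (l2:ℚ) * (Fw (l1-1) (l2-1) (N-1) (n-1) x
          - (if x = 0 then 0 else Fw (l1-1) (l2-1) (N-1) (n-1) (x-1))) := by
  have hl10 : (l1:ℚ) ≠ 0 := Nat.cast_ne_zero.mpr (by omega)
  apply mul_left_cancel₀ hl10
  have hos := onestep l1 l2 N n hn hl1 hl2 hN h2 (x:ℚ)
  unfold Fw
  rcases Nat.eq_zero_or_pos x with h0 | h1
  · subst h0
    rw [if_pos rfl]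
    have hz : ((0:ℕ):ℚ) = 0 := by norm_num
    rw [hz] at hos ⊢
    have hW := W1 l1 l2 N (by omega) (by omega) (by omega) 0
    calc (l1:ℚ) * ((N:ℚ) * (Qb l1 l2 N n 0 * (l1.choose 0) * Wt l2 N 0))
        = ((l1:ℚ) * N * Qb l1 l2 N n 0) * ((l1.choose 0 : ℚ) * Wt l2 N 0) := by ring
      _ = (((l1:ℚ) - 0) * ((N:ℚ) - 0) * Qb (l1-1) (l2-1) (N-1) (n-1) 0
            - 0 * ((l2:ℚ) - N + 0) * Qb (l1-1) (l2-1) (N-1) (n-1) (0-1))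
            * ((l1.choose 0 : ℚ) * Wt l2 N 0) := by rw [hos]
      _ = Qb (l1-1) (l2-1) (N-1) (n-1) 0 *
            (((l1:ℚ)-0) * ((N:ℚ)-0) * (l1.choose 0) * Wt l2 N 0) := by
          push_cast
          ring
      _ = Qb (l1-1) (l2-1) (N-1) (n-1) 0 *
            ((l1:ℚ) * l2 * ((l1-1).choose 0) * Wt (l2-1) (N-1) 0) := by
          rw [show ((0:ℕ):ℚ) = 0 from by norm_num] at hW
          rw [hW]
      _ = _ := by push_cast; ring
  · rw [if_neg (by omega : ¬ x = 0)]
    have hc : ((x - 1 : ℕ) : ℚ) = (x:ℚ) - 1 := by push_cast [Nat.cast_sub h1]; ring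
    have hW1 := W1 l1 l2 N (by omega) (by omega) (by omega) x
    have hW2 := W2 l1 l2 N (by omega) (by omega) (by omega) x h1
    calc (l1:ℚ) * ((N:ℚ) * (Qb l1 l2 N n x * (l1.choose x) * Wt l2 N x))
        = ((l1:ℚ) * N * Qb l1 l2 N n x) * ((l1.choose x : ℚ) * Wt l2 N x) := by ring
      _ = (((l1:ℚ) - x) * ((N:ℚ) - x) * Qb (l1-1) (l2-1) (N-1) (n-1) x
            - x * ((l2:ℚ) - N + x) * Qb (l1-1) (l2-1) (N-1) (n-1) ((x:ℚ)-1))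
            * ((l1.choose x : ℚ) * Wt l2 N x) := by rw [hos]
      _ = Qb (l1-1) (l2-1) (N-1) (n-1) x *
            (((l1:ℚ)-x) * ((N:ℚ)-x) * (l1.choose x) * Wt l2 N x)
          - Qb (l1-1) (l2-1) (N-1) (n-1) ((x:ℚ)-1) *
            ((x:ℚ) * ((l2:ℚ)-N+x) * (l1.choose x) * Wt l2 N x) := by ring
      _ = Qb (l1-1) (l2-1) (N-1) (n-1) x *
            ((l1:ℚ) * l2 * ((l1-1).choose x) * Wt (l2-1) (N-1) x)
          - Qb (l1-1) (l2-1) (N-1) (n-1) ((x:ℚ)-1) *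
            ((l1:ℚ) * l2 * ((l1-1).choose (x-1)) * Wt (l2-1) (N-1) (x-1)) := by
          rw [hW1, hW2]
      _ = _ := by rw [← hc]; ring

theorem Vsplit (l1 l2 N n j : ℕ) (hn : 1 ≤ n) (hl1 : n ≤ l1) (hl2 : n ≤ l2) (hN : n ≤ N)
    (h2 : 2*n ≤ l1+l2) :
    (N:ℚ) * V l1 l2 N n j
      = (l2:ℚ) * ∑ x ∈ Finset.range N,
          (((x.choose j : ℚ) - ((x+1).choose j)) * Fw (l1-1) (l2-1) (N-1) (n-1) x) := by
  unfold V
  rw [Finset.mul_sum]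
  have h1 : ∀ x ∈ Finset.range (N+1),
      (N:ℚ) * ((x.choose j : ℚ) * Fw l1 l2 N n x)
      = (x.choose j : ℚ) * ((l2:ℚ) * (Fw (l1-1) (l2-1) (N-1) (n-1) x
          - (if x = 0 then 0 else Fw (l1-1) (l2-1) (N-1) (n-1) (x-1)))) := by
    intro x _
    rw [← FwStep l1 l2 N n hn hl1 hl2 hN h2 x]
    ring
  rw [Finset.sum_congr rfl h1]
  have expand : ∀ x ∈ Finset.range (N+1),
      (x.choose j : ℚ) * ((l2:ℚ) * (Fw (l1-1) (l2-1) (N-1) (n-1) x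
          - (if x = 0 then 0 else Fw (l1-1) (l2-1) (N-1) (n-1) (x-1))))
      = (l2:ℚ) * ((x.choose j : ℚ) * Fw (l1-1) (l2-1) (N-1) (n-1) x)
        - (l2:ℚ) * ((x.choose j : ℚ) *
            (if x = 0 then 0 else Fw (l1-1) (l2-1) (N-1) (n-1) (x-1))) := by
    intro x _; ring
  rw [Finset.sum_congr rfl expand, Finset.sum_sub_distrib]
  -- first sum : drop the x = N term (weight vanishes there)
  have hFN : Fw (l1-1) (l2-1) (N-1) (n-1) N = 0 := by
    unfold Fw Wt
    rw [if_neg (by omega : ¬ N ≤ N - 1)]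
    ring
  have e1 : ∑ x ∈ Finset.range (N+1), (l2:ℚ) * ((x.choose j : ℚ) * Fw (l1-1) (l2-1) (N-1) (n-1) x)
      = ∑ x ∈ Finset.range N, (l2:ℚ) * ((x.choose j : ℚ) * Fw (l1-1) (l2-1) (N-1) (n-1) x) := by
    rw [Finset.sum_range_succ, hFN]
    simp
  -- second sum : shift index
  have e2 : ∑ x ∈ Finset.range (N+1), (l2:ℚ) * ((x.choose j : ℚ) *
        (if x = 0 then 0 else Fw (l1-1) (l2-1) (N-1) (n-1) (x-1)))
      = ∑ x ∈ Finset.range N, (l2:ℚ) * (((x+1).choose j : ℚ) * Fw (l1-1) (l2-1) (N-1) (n-1) x) := by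
    rw [Finset.sum_range_succ']
    norm_num
  rw [e1, e2, ← Finset.sum_sub_distrib]
  rw [Finset.mul_sum]
  apply Finset.sum_congr rfl
  intro x _
  ring

theorem Vzero (l1 l2 N n : ℕ) (hn : 1 ≤ n) (hl1 : n ≤ l1) (hl2 : n ≤ l2) (hN : n ≤ N)
    (h2 : 2*n ≤ l1+l2) :
    V l1 l2 N n 0 = 0 := by
  have h := Vsplit l1 l2 N n 0 hn hl1 hl2 hN h2
  have hz : ∀ x ∈ Finset.range N,
      (((x.choose 0 : ℚ) - ((x+1).choose 0)) * Fw (l1-1) (l2-1) (N-1) (n-1) x) = 0 := by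
    intro x _; simp
  rw [Finset.sum_congr rfl hz] at h
  simp at h
  rcases h with h | h
  · omega
  · exact h

theorem Vrec (l1 l2 N n j : ℕ) (hn : 1 ≤ n) (hj : 1 ≤ j) (hl1 : n ≤ l1) (hl2 : n ≤ l2)
    (hN : n ≤ N) (h2 : 2*n ≤ l1+l2) :
    (N:ℚ) * V l1 l2 N n j = -(l2:ℚ) * V (l1-1) (l2-1) (N-1) (n-1) (j-1) := by
  rw [Vsplit l1 l2 N n j hn hl1 hl2 hN h2]
  have hp : ∀ x ∈ Finset.range N,
      (((x.choose j : ℚ) - ((x+1).choose j)) * Fw (l1-1) (l2-1) (N-1) (n-1) x)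
      = -((x.choose (j-1) : ℚ) * Fw (l1-1) (l2-1) (N-1) (n-1) x) := by
    intro x _
    have hc : (x+1).choose j = x.choose (j-1) + x.choose j := by
      have e : j = (j-1) + 1 := by omega
      rw [e]
      exact Nat.choose_succ_succ x (j-1)
    rw [hc]
    push_cast
    ring
  rw [Finset.sum_congr rfl hp]
  unfold V
  rw [(by omega : (N-1)+1 = N), Finset.mul_sum, Finset.mul_sum]
  apply Finset.sum_congr rfl
  intro x _
  ring

theorem Qb_zero (l1 l2 N : ℕ) (x : ℚ) : Qb l1 l2 N 0 x = 1 := by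
  unfold Qb
  simp [poch]

theorem vdm (l1 l2 N : ℕ) :
    ∑ x ∈ Finset.range (N+1), (l1.choose x : ℚ) * Wt l2 N x = ((l1+l2).choose N : ℚ) := by
  have h1 : ∀ x ∈ Finset.range (N+1),
      (l1.choose x : ℚ) * Wt l2 N x = ((l1.choose x * l2.choose (N-x) : ℕ) : ℚ) := by
    intro x hx
    have hx' := Finset.mem_range.mp hx
    unfold Wt
    rw [if_pos (by omega : x ≤ N)]
    push_cast; ring
  rw [Finset.sum_congr rfl h1, ← Nat.cast_sum]
  congr 1
  have := Nat.add_choose_eq l1 l2 N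
  rw [this, Finset.Nat.sum_antidiagonal_eq_sum_range_succ_mk]

theorem Vbase (l1 l2 N : ℕ) : V l1 l2 N 0 0 = ((l1+l2).choose N : ℚ) := by
  unfold V Fw
  rw [← vdm l1 l2 N]
  apply Finset.sum_congr rfl
  intro x _
  rw [Qb_zero]
  simp

theorem Vvanish : ∀ n l1 l2 N j : ℕ, j < n → n ≤ l1 → n ≤ l2 → n ≤ N → 2*n ≤ l1+l2 →
    V l1 l2 N n j = 0 := by
  intro n
  induction n with
  | zero => intro l1 l2 N j hj; omega
  | succ n ih =>
    intro l1 l2 N j hj hl1 hl2 hN h2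
    rcases Nat.eq_zero_or_pos j with h0 | h1
    · subst h0
      exact Vzero l1 l2 N (n+1) (by omega) hl1 hl2 hN h2
    · have hr := Vrec l1 l2 N (n+1) j (by omega) h1 hl1 hl2 hN h2
      have hih := ih (l1-1) (l2-1) (N-1) (j-1) (by omega) (by omega) (by omega) (by omega) (by omega)
      rw [(by omega : n + 1 - 1 = n)] at hr
      rw [hih] at hr
      have hN0 : (N:ℚ) ≠ 0 := Nat.cast_ne_zero.mpr (by omega)
      rw [mul_zero] at hr
      exact (mul_eq_zero.mp hr).resolve_left hN0

theorem Vdiag : ∀ n l1 l2 N : ℕ, n ≤ l1 → n ≤ l2 → n ≤ N → 2*n ≤ l1+l2 →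
    (N.choose n : ℚ) * V l1 l2 N n n
      = (-1)^n * (l2.choose n : ℚ) * ((l1+l2-2*n).choose (N-n) : ℚ) := by
  intro n
  induction n with
  | zero =>
    intro l1 l2 N _ _ _ _
    simp [Vbase]
  | succ n ih =>
    intro l1 l2 N hl1 hl2 hN h2
    have hr := Vrec l1 l2 N (n+1) (n+1) (by omega) (by omega) hl1 hl2 hN h2
    rw [(by omega : n + 1 - 1 = n)] at hr
    have hih := ih (l1-1) (l2-1) (N-1) (by omega) (by omega) (by omega) (by omega)
    have harg1 : (l1-1)+(l2-1)-2*n = l1+l2-2*(n+1) := by omega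
    have harg2 : N-1-n = N-(n+1) := by omega
    rw [harg1, harg2] at hih
    -- cancel factor N * C(N-1,n)
    have hNn : (N:ℚ) ≠ 0 := Nat.cast_ne_zero.mpr (by omega)
    have hCN : ((N-1).choose n : ℚ) ≠ 0 := choose_ne _ _ (by omega)
    apply mul_left_cancel₀ (mul_ne_zero hNn hCN)
    have c1 : (l2:ℚ) * ((l2-1).choose n) = ((n:ℚ)+1) * (l2.choose (n+1)) := by
      have := cc3 l2 (n+1) (by omega) (by omega)
      rw [(by omega : n + 1 - 1 = n)] at this
      push_cast at this ⊢
      linarith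
    have c2 : (N:ℚ) * ((N-1).choose n) = ((n:ℚ)+1) * (N.choose (n+1)) := by
      have := cc3 N (n+1) (by omega) (by omega)
      rw [(by omega : n + 1 - 1 = n)] at this
      push_cast at this ⊢
      linarith
    calc (N:ℚ) * ((N-1).choose n) * ((N.choose (n+1) : ℚ) * V l1 l2 N (n+1) (n+1))
        = (((N-1).choose n : ℚ) * (N.choose (n+1))) * ((N:ℚ) * V l1 l2 N (n+1) (n+1)) := by ring
      _ = (((N-1).choose n : ℚ) * (N.choose (n+1))) *
            (-(l2:ℚ) * V (l1-1) (l2-1) (N-1) n n) := by rw [hr]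
      _ = -(l2:ℚ) * (N.choose (n+1) : ℚ) *
            (((N-1).choose n : ℚ) * V (l1-1) (l2-1) (N-1) n n) := by ring
      _ = -(l2:ℚ) * (N.choose (n+1) : ℚ) *
            ((-1)^n * ((l2-1).choose n : ℚ) * ((l1+l2-2*(n+1)).choose (N-(n+1)) : ℚ)) := by
          rw [hih]
      _ = (-1)^(n+1) * ((l2:ℚ) * ((l2-1).choose n)) * (N.choose (n+1) : ℚ) *
            ((l1+l2-2*(n+1)).choose (N-(n+1)) : ℚ) := by ring
      _ = (-1)^(n+1) * (((n:ℚ)+1) * (l2.choose (n+1))) * (N.choose (n+1) : ℚ) *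
            ((l1+l2-2*(n+1)).choose (N-(n+1)) : ℚ) := by rw [c1]
      _ = (((n:ℚ)+1) * (N.choose (n+1))) * ((-1)^(n+1) * (l2.choose (n+1) : ℚ) *
            ((l1+l2-2*(n+1)).choose (N-(n+1)) : ℚ)) := by ring
      _ = _ := by rw [← c2]

theorem finalg (L N n : ℕ) (hnN : n ≤ N) (hNL : N ≤ L) (hnLN : n + N ≤ L) :
    ((L+1-n).choose n : ℚ) * ((L-2*n).choose (N-n)) * (L.choose n) * ((L+1-2*n : ℕ) : ℚ)
    = ((L-N).choose n : ℚ) * ((L+1-n : ℕ) : ℚ) * (N.choose n) * (L.choose N) := by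
  have c1 : ((L+1-n).choose n : ℚ) = ((L+1-n).factorial : ℚ) /
      ((n.factorial : ℚ) * ((L+1-2*n).factorial : ℚ)) := by
    rw [Nat.cast_choose ℚ (by omega : n ≤ L+1-n), (by omega : L+1-n - n = L+1-2*n)]
  have c2 : ((L-2*n).choose (N-n) : ℚ) = ((L-2*n).factorial : ℚ) /
      (((N-n).factorial : ℚ) * ((L-N-n).factorial : ℚ)) := by
    rw [Nat.cast_choose ℚ (by omega : N-n ≤ L-2*n), (by omega : L-2*n - (N-n) = L-N-n)]
  have c3 : (L.choose n : ℚ) = (L.factorial : ℚ) /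
      ((n.factorial : ℚ) * ((L-n).factorial : ℚ)) := by
    rw [Nat.cast_choose ℚ (by omega : n ≤ L)]
  have c4 : ((L-N).choose n : ℚ) = ((L-N).factorial : ℚ) /
      ((n.factorial : ℚ) * ((L-N-n).factorial : ℚ)) := by
    rw [Nat.cast_choose ℚ (by omega : n ≤ L-N), (by omega : L-N - n = L-N-n)]
  have c5 : (N.choose n : ℚ) = (N.factorial : ℚ) /
      ((n.factorial : ℚ) * ((N-n).factorial : ℚ)) := by
    rw [Nat.cast_choose ℚ hnN]
  have c6 : (L.choose N : ℚ) = (L.factorial : ℚ) /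
      ((N.factorial : ℚ) * ((L-N).factorial : ℚ)) := by
    rw [Nat.cast_choose ℚ hNL]
  have f1 : ((L+1-n).factorial : ℚ) = ((L+1-n : ℕ) : ℚ) * ((L-n).factorial : ℚ) := by
    rw [(by omega : L+1-n = (L-n)+1), Nat.factorial_succ]
    push_cast
    ring
  have f2 : ((L+1-2*n).factorial : ℚ) = ((L+1-2*n : ℕ) : ℚ) * ((L-2*n).factorial : ℚ) := by
    rw [(by omega : L+1-2*n = (L-2*n)+1), Nat.factorial_succ]
    push_cast
    ring
  rw [c1, c2, c3, c4, c5, c6, f1, f2]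
  have h1 : (n.factorial : ℚ) ≠ 0 := Nat.cast_ne_zero.mpr (Nat.factorial_ne_zero _)
  have h2 : ((L-2*n).factorial : ℚ) ≠ 0 := Nat.cast_ne_zero.mpr (Nat.factorial_ne_zero _)
  have h3 : ((N-n).factorial : ℚ) ≠ 0 := Nat.cast_ne_zero.mpr (Nat.factorial_ne_zero _)
  have h4 : ((L-N-n).factorial : ℚ) ≠ 0 := Nat.cast_ne_zero.mpr (Nat.factorial_ne_zero _)
  have h5 : ((L-n).factorial : ℚ) ≠ 0 := Nat.cast_ne_zero.mpr (Nat.factorial_ne_zero _)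
  have h6 : (N.factorial : ℚ) ≠ 0 := Nat.cast_ne_zero.mpr (Nat.factorial_ne_zero _)
  have h7 : ((L-N).factorial : ℚ) ≠ 0 := Nat.cast_ne_zero.mpr (Nat.factorial_ne_zero _)
  have h8 : ((L+1-2*n : ℕ) : ℚ) ≠ 0 := Nat.cast_ne_zero.mpr (by omega)
  field_simp

theorem hahn_norm (N l1 l2 : ℕ) (hN : 0 < N) (h1 : 0 < l1) (h2 : 0 < l2)
    (h : N ≤ l1 + l2) (n : ℕ) (hn : n ≤ min l1 N + min l2 N - N) :
    ∑ x ∈ Finset.Icc (N - min l2 N) (min l1 N),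
        hahnQ l1 l2 N n x ^ 2 * hyperH l1 l2 N x =
      (-1) ^ n * (n.factorial : ℚ) * poch (-(l2 : ℚ)) n *
          poch (-(l1 : ℚ) - (l2 : ℚ) + N) n * ((l1 : ℚ) + l2 + 1 - n) /
        (poch (-(l1 : ℚ)) n * poch (-(l1 : ℚ) - (l2 : ℚ)) n * poch (-(N : ℚ)) n *
          ((l1 : ℚ) + l2 + 1 - 2 * n)) := by
  have hm1a : min l1 N ≤ l1 := min_le_left _ _
  have hm1b : min l1 N ≤ N := min_le_right _ _
  have hm2a : min l2 N ≤ l2 := min_le_left _ _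
  have hm2b : min l2 N ≤ N := min_le_right _ _
  have hmsum : N ≤ min l1 N + min l2 N := by omega
  have hkey : n + N ≤ min l1 N + min l2 N := by omega
  have hn1 : n ≤ l1 := by omega
  have hn2 : n ≤ l2 := by omega
  have hn3 : n ≤ N := by omega
  have hnN : n + N ≤ l1 + l2 := by omega
  have h2n : 2*n ≤ l1 + l2 := by omega
  -- Step 1: extend the summation range
  have hIcc : Finset.Icc (N - min l2 N) (min l1 N) ⊆ Finset.range (N+1) := by
    intro x hx
    rw [Finset.mem_Icc] at hx
    rw [Finset.mem_range]
    omega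
  have hout : ∀ x ∈ Finset.range (N+1), x ∉ Finset.Icc (N - min l2 N) (min l1 N) →
      hahnQ l1 l2 N n x ^ 2 * hyperH l1 l2 N x = 0 := by
    intro x hx hnot
    rw [Finset.mem_range] at hx
    rw [Finset.mem_Icc] at hnot
    push_neg at hnot
    have hzero : (l1.choose x : ℚ) * (l2.choose (N-x)) = 0 := by
      rcases (by omega : x < N - min l2 N ∨ min l1 N < x) with hc | hc
      · rw [Nat.choose_eq_zero_of_lt (by omega : l2 < N - x)]
        ring
      · rw [Nat.choose_eq_zero_of_lt (by omega : l1 < x)]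
        ring
    unfold hyperH
    rw [hzero]
    ring
  rw [Finset.sum_subset hIcc hout]
  -- Step 2: per-term rewrite
  have hterm : ∀ x ∈ Finset.range (N+1),
      hahnQ l1 l2 N n x ^ 2 * hyperH l1 l2 N x
      = Qb l1 l2 N n x * Fw l1 l2 N n x / (((l1+l2).choose N : ℕ) : ℚ) := by
    intro x hx
    rw [Finset.mem_range] at hx
    rw [hahnQ_eq_Qb l1 l2 N n (by omega) x]
    unfold hyperH Fw Wt
    rw [if_pos (by omega : x ≤ N)]
    push_cast
    ring
  rw [Finset.sum_congr rfl hterm, ← Finset.sum_div]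
  -- Step 3: expand one Qb factor and recognize V
  have hexp : ∑ x ∈ Finset.range (N+1), Qb l1 l2 N n x * Fw l1 l2 N n x
      = ∑ k ∈ Finset.range (n+1), (-1)^k *
          ((n.choose k : ℚ) * ((l1+l2+1-n).choose k) / ((l1.choose k : ℚ) * (N.choose k)))
          * V l1 l2 N n k := by
    simp only [Qb]
    have e1 : ∀ x ∈ Finset.range (N+1),
        (∑ k ∈ Finset.range (n+1),
          (n.choose k : ℚ) * ((l1+l2+1-n).choose k : ℚ) * poch (-(x:ℚ)) k /
            ((l1.choose k : ℚ) * (N.choose k : ℚ) * (k.factorial : ℚ))) * Fw l1 l2 N n x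
        = ∑ k ∈ Finset.range (n+1),
          ((n.choose k : ℚ) * ((l1+l2+1-n).choose k : ℚ) * poch (-(x:ℚ)) k /
            ((l1.choose k : ℚ) * (N.choose k : ℚ) * (k.factorial : ℚ))) * Fw l1 l2 N n x := by
      intro x _
      exact Finset.sum_mul _ _ _
    rw [Finset.sum_congr rfl e1, Finset.sum_comm]
    apply Finset.sum_congr rfl
    intro k hk
    have hk' := Finset.mem_range.mp hk
    unfold V
    rw [Finset.mul_sum]
    apply Finset.sum_congr rfl
    intro x _
    rw [poch_nat x k]
    have hY1 : (l1.choose k : ℚ) ≠ 0 := choose_ne _ _ (by omega)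
    have hY2 : (N.choose k : ℚ) ≠ 0 := choose_ne _ _ (by omega)
    have hkf : (k.factorial : ℚ) ≠ 0 := Nat.cast_ne_zero.mpr (Nat.factorial_ne_zero _)
    field_simp
  rw [hexp, Finset.sum_range_succ]
  have hvan : ∀ k ∈ Finset.range n, (-1:ℚ)^k *
      ((n.choose k : ℚ) * ((l1+l2+1-n).choose k) / ((l1.choose k : ℚ) * (N.choose k)))
      * V l1 l2 N n k = 0 := by
    intro k hk
    rw [Vvanish n l1 l2 N k (Finset.mem_range.mp hk) hn1 hn2 hn3 h2n]
    ring
  rw [Finset.sum_congr rfl hvan, Finset.sum_const, smul_zero, zero_add, Nat.choose_self]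
  -- use the diagonal value
  have hVd := Vdiag n l1 l2 N hn1 hn2 hn3 h2n
  have hCNn : (N.choose n : ℚ) ≠ 0 := choose_ne _ _ hn3
  have hX : V l1 l2 N n n
      = (-1)^n * (l2.choose n : ℚ) * ((l1+l2-2*n).choose (N-n) : ℚ) / (N.choose n : ℚ) := by
    rw [eq_div_iff hCNn]
    linarith [hVd]
  rw [hX]
  -- rewrite the RHS pochhammers
  have e1 : -(l1:ℚ) - l2 + N = -(((l1+l2-N : ℕ)) : ℚ) := by
    push_cast [Nat.cast_sub h]; ring
  have e2 : -(l1:ℚ) - l2 = -(((l1+l2 : ℕ)) : ℚ) := by push_cast; ring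
  have e3 : (l1:ℚ) + l2 + 1 - n = ((l1+l2+1-n : ℕ) : ℚ) := by
    push_cast [Nat.cast_sub (by omega : n ≤ l1+l2+1)]; ring
  have e4 : (l1:ℚ) + l2 + 1 - 2*n = ((l1+l2+1-2*n : ℕ) : ℚ) := by
    push_cast [Nat.cast_sub (by omega : 2*n ≤ l1+l2+1)]; ring
  rw [e1, e2, e3, e4, poch_nat l2 n, poch_nat (l1+l2-N) n, poch_nat l1 n,
    poch_nat (l1+l2) n, poch_nat N n]
  -- simplify the sign/factorial factors on the RHS
  have hs : ((-1:ℚ)^n * n.factorial) ≠ 0 := by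
    apply mul_ne_zero (pow_ne_zero _ (by norm_num))
    exact_mod_cast Nat.factorial_ne_zero n
  have hRHS : (-1:ℚ) ^ n * (n.factorial : ℚ) * ((-1)^n * n.factorial * (l2.choose n)) *
        ((-1)^n * n.factorial * ((l1+l2-N).choose n)) * ((l1+l2+1-n : ℕ) : ℚ) /
      ((-1:ℚ)^n * n.factorial * (l1.choose n) * ((-1)^n * n.factorial * ((l1+l2).choose n)) *
        ((-1)^n * n.factorial * (N.choose n)) * ((l1+l2+1-2*n : ℕ) : ℚ))
      = ((l2.choose n : ℚ) * ((l1+l2-N).choose n) * ((l1+l2+1-n : ℕ) : ℚ)) /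
        ((l1.choose n : ℚ) * ((l1+l2).choose n) * (N.choose n) * ((l1+l2+1-2*n : ℕ) : ℚ)) := by
    rw [show ((-1:ℚ) ^ n * (n.factorial : ℚ) * ((-1)^n * n.factorial * (l2.choose n)) *
        ((-1)^n * n.factorial * ((l1+l2-N).choose n)) * ((l1+l2+1-n : ℕ) : ℚ))
      = (((-1:ℚ)^n * n.factorial) * (((-1:ℚ)^n * n.factorial) * (((-1:ℚ)^n * n.factorial)))) *
        ((l2.choose n : ℚ) * ((l1+l2-N).choose n) * ((l1+l2+1-n : ℕ) : ℚ)) from by ring]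
    rw [show ((-1:ℚ)^n * n.factorial * (l1.choose n) * ((-1)^n * n.factorial * ((l1+l2).choose n)) *
        ((-1)^n * n.factorial * (N.choose n)) * ((l1+l2+1-2*n : ℕ) : ℚ))
      = (((-1:ℚ)^n * n.factorial) * (((-1:ℚ)^n * n.factorial) * (((-1:ℚ)^n * n.factorial)))) *
        ((l1.choose n : ℚ) * ((l1+l2).choose n) * (N.choose n) * ((l1+l2+1-2*n : ℕ) : ℚ)) from by ring]
    exact mul_div_mul_left _ _ (mul_ne_zero hs (mul_ne_zero hs hs))
  rw [hRHS]
  -- final cross-multiplied identity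
  have hfin := finalg (l1+l2) N n hn3 h (by omega)
  have hd1 : ((l1.choose n : ℚ) * (N.choose n)) * (N.choose n : ℚ) * (((l1+l2).choose N : ℕ) : ℚ) ≠ 0 := by
    push_cast
    exact mul_ne_zero (mul_ne_zero (mul_ne_zero (choose_ne _ _ hn1) hCNn) hCNn)
      (choose_ne _ _ (by omega))
  have hd2 : ((l1.choose n : ℚ) * ((l1+l2).choose n) * (N.choose n) * ((l1+l2+1-2*n : ℕ) : ℚ)) ≠ 0 := by
    refine mul_ne_zero (mul_ne_zero (mul_ne_zero (choose_ne _ _ hn1) (choose_ne _ _ (by omega))) hCNn) ?_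
    exact Nat.cast_ne_zero.mpr (by omega)
  have hC1 : (l1.choose n : ℚ) ≠ 0 := choose_ne _ _ hn1
  have hCL : (((l1+l2).choose n : ℕ) : ℚ) ≠ 0 := choose_ne _ _ (by omega)
  have hCLN : (((l1+l2).choose N : ℕ) : ℚ) ≠ 0 := choose_ne _ _ h
  have hB : ((l1+l2+1-2*n : ℕ) : ℚ) ≠ 0 := Nat.cast_ne_zero.mpr (by omega)
  have hsq : ((-1:ℚ)^n) * ((-1:ℚ)^n) = 1 := by
    rw [← pow_add, show n+n = 2*n from by ring, pow_mul]
    norm_num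
  have hrw : (-1:ℚ) ^ n * ((1:ℚ) * ((l1+l2+1-n).choose n : ℚ) / ((l1.choose n : ℚ) * (N.choose n))) *
        ((-1:ℚ) ^ n * (l2.choose n : ℚ) * ((l1+l2-2*n).choose (N-n) : ℚ) / (N.choose n : ℚ)) /
        (((l1+l2).choose N : ℕ) : ℚ)
      = (((-1:ℚ)^n) * ((-1:ℚ)^n)) *
        (((l1+l2+1-n).choose n : ℚ) * (l2.choose n) * ((l1+l2-2*n).choose (N-n)) /
          ((l1.choose n : ℚ) * (N.choose n) * (N.choose n) * (((l1+l2).choose N : ℕ) : ℚ))) := by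
    ring
  rw [Nat.cast_one, hrw, hsq, one_mul, div_eq_div_iff (by
      exact mul_ne_zero (mul_ne_zero (mul_ne_zero hC1 hCNn) hCNn) hCLN) hd2]
  linear_combination ((l2.choose n : ℚ) * (l1.choose n) * (N.choose n)) * hfin
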